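/- Let n ≥ 5 and 2 ≤ k < n/2 be integers, and let ξ : ℝ → ℝ be a C² function. Define F_k[ξ](t) = 2^{1-k}·C(n-1,k-1)·e^{2kξ(t)}(1-ξ'(t)²)^{k-1}(ξ''(t) + ((n-2k)/(2k))(1-ξ'(t)²)) and H̄(x,y) = 2^{-k}·C(n,k)·e^{(2k-n)x}(1-y²)^k - e^{-nx}. Then for all t, (d/dt) H̄(ξ(t), ξ'(t)) = -n·(F_k[ξ](t) - 1)·e^{-nξ(t)}·ξ'(t). -/

import Mathlib

open Real

theorem stmt_3 (n k : ℕ) (hn : 5 ≤ n) (hk : 2 ≤ k) (hkn : 2 * k < n)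
    (ξ : ℝ → ℝ) (hξ : ContDiff ℝ 2 ξ)
    (Fk : ℝ → ℝ)
    (hFk : ∀ t, Fk t = (2:ℝ) ^ ((1:ℝ) - (k:ℝ)) * ((n - 1).choose (k - 1) : ℝ) *
        Real.exp (2 * (k:ℝ) * ξ t) * (1 - (deriv ξ t) ^ 2) ^ (k - 1) *
        (deriv (deriv ξ) t + (((n:ℝ) - 2 * (k:ℝ)) / (2 * (k:ℝ))) * (1 - (deriv ξ t) ^ 2)))
    (Hbar : ℝ → ℝ → ℝ)
    (hHbar : ∀ x y, Hbar x y = (2:ℝ) ^ (-(k:ℝ)) * (n.choose k : ℝ) *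
        Real.exp ((2 * (k:ℝ) - (n:ℝ)) * x) * (1 - y ^ 2) ^ k - Real.exp (-(n:ℝ) * x)) :
    ∀ t : ℝ, HasDerivAt (fun s => Hbar (ξ s) (deriv ξ s))
      (-(n:ℝ) * (Fk t - 1) * Real.exp (-(n:ℝ) * ξ t) * deriv ξ t) t := by
  intro t
  have hξ1 : Differentiable ℝ ξ := hξ.differentiable (by norm_num)
  have hξ' : ContDiff ℝ 1 (deriv ξ) := by
    have h2 : ContDiff ℝ ((1:ℕ)+1 : ℕ) ξ := by exact_mod_cast hξ
    exact (contDiff_succ_iff_deriv.mp (by exact_mod_cast h2 : ContDiff ℝ ((1:ℕ∞)+1) ξ)).2.2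
  have hξ2 : Differentiable ℝ (deriv ξ) := hξ'.differentiable (by norm_num)
  set v := deriv ξ t with hv0
  set w := deriv (deriv ξ) t with hw0
  have hv : HasDerivAt ξ v t := (hξ1 t).hasDerivAt
  have hw : HasDerivAt (deriv ξ) w t := (hξ2 t).hasDerivAt
  set cc : ℝ := (2:ℝ) ^ (-(k:ℝ)) * (n.choose k : ℝ) with hcc
  set a : ℝ := 2 * (k:ℝ) - (n:ℝ) with ha
  have hA : HasDerivAt (fun s => Real.exp (a * ξ s))
      (Real.exp (a * ξ t) * (a * v)) t := (hv.const_mul a).exp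
  have hP : HasDerivAt (fun s => 1 - (deriv ξ s) ^ 2)
      (-((2:ℕ) * (deriv ξ t) ^ (2-1) * w)) t := (hw.pow 2).const_sub 1
  have hPk : HasDerivAt (fun s => (1 - (deriv ξ s) ^ 2) ^ k)
      ((k:ℕ) * (1 - (deriv ξ t) ^ 2) ^ (k-1) * (-((2:ℕ) * (deriv ξ t) ^ (2-1) * w))) t :=
    hP.pow k
  have hB : HasDerivAt (fun s => Real.exp (-(n:ℝ) * ξ s))
      (Real.exp (-(n:ℝ) * ξ t) * (-(n:ℝ) * v)) t := (hv.const_mul (-(n:ℝ))).exp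
  have key := ((hA.mul hPk).const_mul cc).sub hB
  have hfun : (fun s => Hbar (ξ s) (deriv ξ s))
      = fun s => cc * (Real.exp (a * ξ s) * (1 - (deriv ξ s) ^ 2) ^ k)
          - Real.exp (-(n:ℝ) * ξ s) := by
    funext s; rw [hHbar]; ring
  rw [hfun]
  convert key using 1
  case e'_4 => rfl
  case e'_5 => rfl
  case e'_8 => rfl
  -- now the algebraic identity for the derivative values
  rw [hFk]
  have hk1 : 1 ≤ k := le_trans one_le_two hk
  have hbin : ((n:ℝ)) * ((n - 1).choose (k - 1) : ℝ) = ((n.choose k : ℕ) : ℝ) * (k:ℝ) := by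
    have hn1 : 1 ≤ n := by omega
    have := Nat.add_one_mul_choose_eq (n-1) (k-1)
    rw [Nat.sub_add_cancel hn1, Nat.sub_add_cancel hk1] at this
    exact_mod_cast this
  have h2p : (2:ℝ) ^ ((1:ℝ) - (k:ℝ)) = 2 * (2:ℝ) ^ (-(k:ℝ)) := by
    rw [show (1:ℝ) - (k:ℝ) = 1 + (-(k:ℝ)) by ring, Real.rpow_add two_pos, Real.rpow_one]
  have hexp : Real.exp (a * ξ t) = Real.exp (2 * (k:ℝ) * ξ t) * Real.exp (-(n:ℝ) * ξ t) := by
    rw [← Real.exp_add, ha]; ring_nf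
  have hpow : (1 - v ^ 2) ^ k = (1 - v ^ 2) ^ (k-1) * (1 - v ^ 2) := by
    rw [← pow_succ, Nat.sub_add_cancel hk1]
  have hkne : (k:ℝ) ≠ 0 := by positivity
  have hC : ((n.choose k : ℕ) : ℝ) = (n:ℝ) * ((n - 1).choose (k - 1) : ℝ) / (k:ℝ) := by
    field_simp; linarith [hbin]
  rw [hcc, ha, h2p, hexp, hpow, hC]
  field_simp
  ring
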